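/- Let K be an abstract simplicial complex on [m] and J = (j_1,…,j_m) an m-tuple of positive integers. For σ ⊆ ω ⊆ [m] define (σ,ω)_J = Σ_{k∈ω} (j_k−1)·card{i ∈ σ : i > k} + Σ_{k∈ω} (j_k−1)·Σ_{r∈ω, r>k} (j_r−1), taken mod 2. Then the ℤ-linear map η_J : ⊕_{ω⊆[m]} C̃^*(K_ω) → R*_K(J) sending the dual simplex σ*_ω ∈ C̃^*(K_ω) to (−1)^{(σ,ω)_J} ṽ^σ ũ^{ω∖σ} commutes with the differentials (η_J ∘ d = d ∘ η_J) and induces an isomorphism of (ungraded) ℤ-modules ⊕_{ω⊆[m]} H̃^*(K_ω) ≅ H*(R*_K(J)). -/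

import Mathlib

set_option synthInstance.maxHeartbeats 1000000
set_option maxHeartbeats 1000000

structure ASC (m : ℕ) where
  faces : Set (Finset (Fin m))
  empty_mem : ∅ ∈ faces
  down_closed : ∀ {σ τ : Finset (Fin m)}, σ ∈ faces → τ ⊆ σ → τ ∈ faces

def csg {m : ℕ} (i : Fin m) (σ : Finset (Fin m)) : ℤ :=
  (-1) ^ (σ.filter (fun j => j < i)).card

variable {n : ℕ}

/-- index of the square-free monomials `ṽ^σ ũ^τ`. -/
def MonIdx (F : Set (Finset (Fin n))) : Type :=
  {p : Finset (Fin n) × Finset (Fin n) // p.1 ∈ F ∧ Disjoint p.1 p.2}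

/-- the free `ℤ`-module on the square-free monomials: the underlying module of `R*_K(J)`. -/
abbrev RMod (F : Set (Finset (Fin n))) : Type := MonIdx F →₀ ℤ

open Classical in
/-- the differential of `R*_K(J)`, determined by `dũ^i = ṽ^i`, `dṽ^i = 0` and the
graded Leibniz rule:
`d(ṽ^σ ũ^τ) = ∑_{i∈τ, σ∪{i}∈K} (-1)^{∑_{k∈σ,k<i} j_k + ∑_{k∈τ,k<i}(j_k-1)} ṽ^{σ∪{i}} ũ^{τ∖{i}}`. -/
noncomputable def dR (F : Set (Finset (Fin n))) (J : Fin n → ℕ) :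
    RMod F →ₗ[ℤ] RMod F :=
  Finsupp.lift (RMod F) ℤ (MonIdx F) fun b =>
    ∑ i ∈ b.1.2,
      if h : insert i b.1.1 ∈ F then
        ((-1 : ℤ) ^ (∑ k ∈ b.1.1.filter (fun k => k < i), J k +
            ∑ k ∈ b.1.2.filter (fun k => k < i), (J k - 1))) •
          Finsupp.single (⟨(insert i b.1.1, b.1.2.erase i),
            ⟨h, by
              refine Finset.disjoint_left.2 fun a ha hb => ?_
              rcases Finset.mem_insert.1 ha with h' | h'
              · exact (Finset.mem_erase.1 hb).1 h'
              · exact (Finset.disjoint_left.1 b.2.2 h') (Finset.mem_of_mem_erase hb)⟩⟩ :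
              MonIdx F) (1 : ℤ)
      else 0

/-- index of basis of `⊕_ω C̃^*(K_ω)` : pairs `(ω, σ)` with `σ ∈ K_ω`. -/
def PairIdx (K : ASC n) : Type :=
  {p : Finset (Fin n) × Finset (Fin n) // p.2 ⊆ p.1 ∧ p.2 ∈ K.faces}

abbrev PairCochain (K : ASC n) : Type := PairIdx K →₀ ℤ

open Classical in
/-- coboundary of `⊕_ω C̃^*(K_ω)` :
`d(σ*_ω) = ∑_{i ∈ ω∖σ, σ∪{i} ∈ K} (-1)^{(i,σ)} (σ∪{i})*_ω`. -/
noncomputable def Paircob (K : ASC n) : PairCochain K →ₗ[ℤ] PairCochain K :=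
  Finsupp.lift (PairCochain K) ℤ (PairIdx K) fun b =>
    ∑ i ∈ (b.1.1 \ b.1.2).attach,
      if h : insert i.1 b.1.2 ∈ K.faces then
        csg i.1 b.1.2 •
          Finsupp.single (⟨(b.1.1, insert i.1 b.1.2),
            ⟨Finset.insert_subset (Finset.mem_sdiff.1 i.2).1 b.2.1, h⟩⟩ :
            PairIdx K) (1 : ℤ)
      else 0

/-- the sign `(σ,ω)_J = ∑_{k∈ω}(j_k-1)·card{i∈σ : i>k} + ∑_{k∈ω}(j_k-1)·∑_{r∈ω,r>k}(j_r-1)`. -/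
def soJ (J : Fin n → ℕ) (σ ω : Finset (Fin n)) : ℕ :=
  ∑ k ∈ ω, (J k - 1) * (σ.filter (fun i => k < i)).card +
    ∑ k ∈ ω, (J k - 1) * ∑ r ∈ ω.filter (fun r => k < r), (J r - 1)

/-- the map `η_J`, sending `σ*_ω` to `(-1)^{(σ,ω)_J} ṽ^σ ũ^{ω∖σ}`. -/
noncomputable def etaJ (K : ASC n) (J : Fin n → ℕ) :
    PairCochain K →ₗ[ℤ] RMod K.faces :=
  Finsupp.lift (RMod K.faces) ℤ (PairIdx K) fun b =>
    ((-1 : ℤ) ^ soJ J b.1.2 b.1.1) •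
      Finsupp.single (⟨(b.1.2, b.1.1 \ b.1.2),
        ⟨b.2.2, Finset.disjoint_sdiff⟩⟩ : MonIdx K.faces) (1 : ℤ)



section Aux

open Classical Finset

variable {K : ASC n}

lemma lift_single {R M X : Type} [CommRing R] [AddCommGroup M] [Module R M]
    (f : X → M) (a : X) :
    Finsupp.lift M R X f (Finsupp.single a (1 : R)) = f a := by
  rw [Finsupp.lift_apply, Finsupp.sum_single_index, one_smul]
  exact zero_smul R (f a)

lemma sq_smul {R M : Type} [CommRing R] [AddCommGroup M] [Module R M]
    (r : R) (h : r * r = 1) (x : M) : r • r • x = x := by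
  rw [smul_smul, h, one_smul]

lemma negOnePowSq (s : ℕ) : ((-1 : ℤ) ^ s) * ((-1 : ℤ) ^ s) = 1 := by
  rw [← pow_add]
  exact Even.neg_one_pow ⟨s, rfl⟩

lemma etaJ_single (J : Fin n → ℕ) (b : PairIdx K) :
    etaJ K J (Finsupp.single b 1) =
      ((-1 : ℤ) ^ soJ J b.1.2 b.1.1) •
        Finsupp.single (⟨(b.1.2, b.1.1 \ b.1.2),
          ⟨b.2.2, Finset.disjoint_sdiff⟩⟩ : MonIdx K.faces) (1 : ℤ) :=
  lift_single _ b

lemma disj_insert_erase {σ τ : Finset (Fin n)} (hd : Disjoint σ τ) (i : Fin n) :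
    Disjoint (insert i σ) (τ.erase i) := by
  refine Finset.disjoint_left.2 fun a ha hb => ?_
  rcases Finset.mem_insert.1 ha with h' | h'
  · exact (Finset.mem_erase.1 hb).1 h'
  · exact (Finset.disjoint_left.1 hd h') (Finset.mem_of_mem_erase hb)

lemma dR_single (F : Set (Finset (Fin n))) (J : Fin n → ℕ) (c : MonIdx F) :
    dR F J (Finsupp.single c 1) =
      ∑ i ∈ c.1.2,
        if h : insert i c.1.1 ∈ F then
          ((-1 : ℤ) ^ (∑ k ∈ c.1.1.filter (fun k => k < i), J k +
              ∑ k ∈ c.1.2.filter (fun k => k < i), (J k - 1))) •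
            Finsupp.single (⟨(insert i c.1.1, c.1.2.erase i),
              ⟨h, disj_insert_erase c.2.2 i⟩⟩ : MonIdx F) (1 : ℤ)
        else 0 :=
  lift_single _ c

lemma Paircob_single (b : PairIdx K) :
    Paircob K (Finsupp.single b 1) =
      ∑ i ∈ (b.1.1 \ b.1.2).attach,
        if h : insert i.1 b.1.2 ∈ K.faces then
          csg i.1 b.1.2 •
            Finsupp.single (⟨(b.1.1, insert i.1 b.1.2),
              ⟨Finset.insert_subset (Finset.mem_sdiff.1 i.2).1 b.2.1, h⟩⟩ : PairIdx K) (1 : ℤ)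
        else 0 :=
  lift_single _ b

/-- key natural-number sign identity -/
lemma soJ_insert (J : Fin n → ℕ) (hJ : ∀ i, 1 ≤ J i) {σ ω : Finset (Fin n)}
    (hσω : σ ⊆ ω) {i : Fin n} (hi : i ∈ ω) (hiσ : i ∉ σ) :
    soJ J (insert i σ) ω + (σ.filter (fun j => j < i)).card
      = soJ J σ ω + (∑ k ∈ σ.filter (fun k => k < i), J k +
          ∑ k ∈ (ω \ σ).filter (fun k => k < i), (J k - 1)) := by
  have h1 : ∀ k : Fin n, ((insert i σ).filter (fun j => k < j)).card
      = (σ.filter (fun j => k < j)).card + (if k < i then 1 else 0) := by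
    intro k
    rw [Finset.filter_insert]
    split_ifs with h
    · rw [Finset.card_insert_of_notMem (by simp [hiσ])]
    · rfl
  have h2 : soJ J (insert i σ) ω = soJ J σ ω + ∑ k ∈ ω.filter (fun k => k < i), (J k - 1) := by
    unfold soJ
    have heq : ∑ k ∈ ω, (J k - 1) * ((insert i σ).filter (fun j => k < j)).card
        = ∑ k ∈ ω, (J k - 1) * (σ.filter (fun j => k < j)).card +
          ∑ k ∈ ω.filter (fun k => k < i), (J k - 1) := by
      rw [Finset.sum_filter, ← Finset.sum_add_distrib]
      apply Finset.sum_congr rfl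
      intro k _
      rw [h1 k]
      split_ifs <;> ring
    omega
  have hsplit : ω.filter (fun k => k < i) =
      σ.filter (fun k => k < i) ∪ (ω \ σ).filter (fun k => k < i) := by
    rw [← Finset.filter_union, Finset.union_sdiff_of_subset hσω]
  have hdisj : Disjoint (σ.filter (fun k => k < i)) ((ω \ σ).filter (fun k => k < i)) :=
    Finset.disjoint_filter_filter Finset.disjoint_sdiff
  have h3 : ∑ k ∈ ω.filter (fun k => k < i), (J k - 1)
      = ∑ k ∈ σ.filter (fun k => k < i), (J k - 1) +
        ∑ k ∈ (ω \ σ).filter (fun k => k < i), (J k - 1) := by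
    rw [hsplit, Finset.sum_union hdisj]
  have h4 : ∑ k ∈ σ.filter (fun k => k < i), (J k - 1) + (σ.filter (fun j => j < i)).card
      = ∑ k ∈ σ.filter (fun k => k < i), J k := by
    have hc : (σ.filter (fun j => j < i)).card = ∑ _k ∈ σ.filter (fun k => k < i), 1 := by
      simp
    rw [hc, ← Finset.sum_add_distrib]
    exact Finset.sum_congr rfl fun k _ => by have := hJ k; omega
  omega

lemma eta_comm_single (J : Fin n → ℕ) (hJ : ∀ i, 1 ≤ J i) (b : PairIdx K) :
    etaJ K J (Paircob K (Finsupp.single b 1)) = dR K.faces J (etaJ K J (Finsupp.single b 1)) := by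
  erw [etaJ_single J b, map_smul, Paircob_single b]
  erw [dR_single]
  erw [map_sum, Finset.smul_sum (r := ((-1 : ℤ) ^ soJ J b.1.2 b.1.1))]
  obtain ⟨⟨ω, σ⟩, hσω, hσK⟩ := b
  simp only
  erw [← Finset.sum_attach (ω \ σ) (fun i =>
    ((-1 : ℤ) ^ soJ J σ ω) • (if h : insert i σ ∈ K.faces then
      ((-1 : ℤ) ^ (∑ k ∈ σ.filter (fun k => k < i), J k +
          ∑ k ∈ (ω \ σ).filter (fun k => k < i), (J k - 1))) •
        Finsupp.single (⟨(insert i σ, (ω \ σ).erase i),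
          ⟨h, disj_insert_erase Finset.disjoint_sdiff i⟩⟩ : MonIdx K.faces) (1 : ℤ)
      else 0))]
  apply Finset.sum_congr rfl
  rintro ⟨i, hi⟩ -
  simp only
  have hmem := Finset.mem_sdiff.1 hi
  split_ifs with h
  · refine (map_smul (etaJ K J) _ _).trans ?_
    erw [etaJ_single]
    simp only
    have hidx : (⟨(insert i σ, ω \ insert i σ),
          ⟨h, Finset.disjoint_sdiff⟩⟩ : MonIdx K.faces)
        = (⟨(insert i σ, (ω \ σ).erase i),
            ⟨h, disj_insert_erase Finset.disjoint_sdiff i⟩⟩ : MonIdx K.faces) := by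
      apply Subtype.ext
      rw [Prod.ext_iff]
      exact ⟨rfl, Finset.sdiff_insert ω σ i⟩
    erw [hidx, smul_smul, smul_smul]
    congr 1
    show ((-1 : ℤ) ^ (σ.filter (fun j => j < i)).card) * (-1 : ℤ) ^ soJ J (insert i σ) ω = _
    rw [← pow_add, ← pow_add, add_comm ((σ.filter (fun j => j < i)).card),
      soJ_insert J hJ hσω hmem.1 hmem.2]
  · erw [smul_zero]
    exact map_zero (etaJ K J)

/-- the inverse of `etaJ` -/
noncomputable def psiJ (K : ASC n) (J : Fin n → ℕ) :
    RMod K.faces →ₗ[ℤ] PairCochain K :=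
  Finsupp.lift (PairCochain K) ℤ (MonIdx K.faces) fun c =>
    ((-1 : ℤ) ^ soJ J c.1.1 (c.1.1 ∪ c.1.2)) •
      Finsupp.single (⟨(c.1.1 ∪ c.1.2, c.1.1),
        ⟨Finset.subset_union_left, c.2.1⟩⟩ : PairIdx K) (1 : ℤ)

lemma psiJ_single (J : Fin n → ℕ) (c : MonIdx K.faces) :
    psiJ K J (Finsupp.single c 1) =
      ((-1 : ℤ) ^ soJ J c.1.1 (c.1.1 ∪ c.1.2)) •
        Finsupp.single (⟨(c.1.1 ∪ c.1.2, c.1.1),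
          ⟨Finset.subset_union_left, c.2.1⟩⟩ : PairIdx K) (1 : ℤ) :=
  lift_single _ c

lemma psi_eta (J : Fin n → ℕ) (x : PairCochain K) : psiJ K J (etaJ K J x) = x := by
  have h : (psiJ K J).comp (etaJ K J) = LinearMap.id := by
    apply Finsupp.lhom_ext'
    intro b
    apply LinearMap.ext_ring
    simp only [LinearMap.comp_apply, Finsupp.lsingle_apply, LinearMap.id_apply]
    erw [etaJ_single, map_smul, psiJ_single]
    obtain ⟨⟨ω, σ⟩, hσω, hσK⟩ := b
    simp only
    have hu : σ ∪ (ω \ σ) = ω := Finset.union_sdiff_of_subset hσω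
    have hidx : (⟨(σ ∪ (ω \ σ), σ),
          ⟨Finset.subset_union_left, hσK⟩⟩ : PairIdx K)
        = (⟨(ω, σ), hσω, hσK⟩ : PairIdx K) := by
      apply Subtype.ext; rw [Prod.ext_iff]; exact ⟨hu, rfl⟩
    rw [hidx, show soJ J σ (σ ∪ (ω \ σ)) = soJ J σ ω by rw [hu]]
    exact sq_smul _ (negOnePowSq _) _
  exact DFunLike.congr_fun h x

lemma eta_psi (J : Fin n → ℕ) (y : RMod K.faces) : etaJ K J (psiJ K J y) = y := by
  have h : (etaJ K J).comp (psiJ K J) = LinearMap.id := by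
    apply Finsupp.lhom_ext'
    intro c
    apply LinearMap.ext_ring
    simp only [LinearMap.comp_apply, Finsupp.lsingle_apply, LinearMap.id_apply]
    erw [psiJ_single, map_smul, etaJ_single]
    obtain ⟨⟨σ, τ⟩, hσK, hd⟩ := c
    simp only
    have hu : (σ ∪ τ) \ σ = τ := Finset.union_sdiff_cancel_left hd
    have hidx : (⟨(σ, (σ ∪ τ) \ σ), ⟨hσK, Finset.disjoint_sdiff⟩⟩ : MonIdx K.faces)
        = (⟨(σ, τ), hσK, hd⟩ : MonIdx K.faces) := by
      apply Subtype.ext; rw [Prod.ext_iff]; exact ⟨rfl, hu⟩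
    rw [hidx]
    exact sq_smul _ (negOnePowSq _) _
  exact DFunLike.congr_fun h y

end Aux

/-- `η_J` is a cochain map and induces an isomorphism
`⊕_ω H̃^*(K_ω) ≅ H^*(R*_K(J))` of (ungraded) `ℤ`-modules. -/
theorem stmt2 (K : ASC n) (J : Fin n → ℕ) (hJ : ∀ i, 1 ≤ J i) :
    (∀ x : PairCochain K, etaJ K J (Paircob K x) = dR K.faces J (etaJ K J x)) ∧
    (∀ x : PairCochain K, Paircob K x = 0 →
      (∃ z, etaJ K J x = dR K.faces J z) → ∃ w, x = Paircob K w) ∧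
    (∀ y : RMod K.faces, dR K.faces J y = 0 →
      ∃ x : PairCochain K, Paircob K x = 0 ∧ ∃ z, y - etaJ K J x = dR K.faces J z) := by
  have hcomm : ∀ x : PairCochain K, etaJ K J (Paircob K x) = dR K.faces J (etaJ K J x) := by
    have : (etaJ K J).comp (Paircob K) = (dR K.faces J).comp (etaJ K J) := by
      apply Finsupp.lhom_ext'
      intro b
      apply LinearMap.ext_ring
      simpa using eta_comm_single J hJ b
    exact fun x => DFunLike.congr_fun this x
  refine ⟨hcomm, ?_, ?_⟩
  · intro x _ ⟨z, hz⟩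
    refine ⟨psiJ K J z, ?_⟩
    have : etaJ K J (Paircob K (psiJ K J z)) = etaJ K J x := by
      rw [hcomm, eta_psi, ← hz]
    have := congrArg (psiJ K J) this
    rw [psi_eta, psi_eta] at this
    exact this.symm
  · intro y hy
    refine ⟨psiJ K J y, ?_, ⟨0, ?_⟩⟩
    · have : etaJ K J (Paircob K (psiJ K J y)) = 0 := by
        rw [hcomm, eta_psi, hy]
      have := congrArg (psiJ K J) this
      rwa [psi_eta, map_zero] at this
    · rw [eta_psi, sub_self, map_zero]
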